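/- For σ_L, σ_R, a, b > 0 and reals m₁, m₂: N(m₁; m₂, σ_L + a + σ_R + b) · N(x; μ̄, σ̄²) = ∬ N(u; x, σ_L) N(v; x, σ_R) N(u; m₁, a) N(v; m₂, b) du dv, where σ̄² = ((σ_L + a)⁻¹ + (σ_R + b)⁻¹)⁻¹ and μ̄ = σ̄²((σ_L + a)⁻¹ m₁ + (σ_R + b)⁻¹ m₂). -/

import Mathlib

open MeasureTheory

/-- Univariate Gaussian probability density function `N(x; μ, σ²)`. -/
noncomputable def gpdf (μ σ2 x : ℝ) : ℝ :=
  (Real.sqrt (2 * Real.pi * σ2))⁻¹ * Real.exp (-((x - μ) ^ 2) / (2 * σ2))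

lemma gpdf_eq (μ : ℝ) (σ2 : ℝ) (hσ : 0 < σ2) :
    gpdf μ σ2 = ProbabilityTheory.gaussianPDFReal μ ⟨σ2, hσ.le⟩ := by
  funext x
  simp [gpdf, ProbabilityTheory.gaussianPDFReal, neg_div, sq]
  rfl

lemma gpdf_integral (μ : ℝ) (σ2 : ℝ) (hσ : 0 < σ2) : ∫ x, gpdf μ σ2 x = 1 := by
  rw [gpdf_eq μ σ2 hσ]
  exact ProbabilityTheory.integral_gaussianPDFReal_eq_one μ
    (NNReal.coe_pos.mp (show (0:ℝ) < ((⟨σ2, hσ.le⟩ : NNReal) : ℝ) from hσ)).ne'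

lemma gpdf_prod (m₁ m₂ : ℝ) (s t : ℝ) (hs : 0 < s) (ht : 0 < t) (y : ℝ) :
    gpdf m₁ s y * gpdf m₂ t y =
      gpdf m₂ (s + t) m₁ *
        gpdf ((s⁻¹ + t⁻¹)⁻¹ * (s⁻¹ * m₁ + t⁻¹ * m₂)) ((s⁻¹ + t⁻¹)⁻¹) y := by
  have hc : (s⁻¹ + t⁻¹)⁻¹ = s * t / (s + t) := by
    rw [inv_add_inv (by positivity) (by positivity), inv_div]
  have hst : 0 < s + t := by positivity
  unfold gpdf
  rw [hc]
  have hA : (Real.sqrt (2 * Real.pi * s))⁻¹ * (Real.sqrt (2 * Real.pi * t))⁻¹ =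
      (Real.sqrt (2 * Real.pi * (s + t)))⁻¹ *
        (Real.sqrt (2 * Real.pi * (s * t / (s + t))))⁻¹ := by
    rw [← mul_inv, ← mul_inv, ← Real.sqrt_mul (by positivity),
      ← Real.sqrt_mul (by positivity)]
    congr 2
    field_simp
  have hE : Real.exp (-((y - m₁) ^ 2) / (2 * s)) * Real.exp (-((y - m₂) ^ 2) / (2 * t)) =
      Real.exp (-((m₁ - m₂) ^ 2) / (2 * (s + t))) *
        Real.exp (-((y - s * t / (s + t) * (s⁻¹ * m₁ + t⁻¹ * m₂)) ^ 2) /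
          (2 * (s * t / (s + t)))) := by
    rw [← Real.exp_add, ← Real.exp_add]
    congr 1
    field_simp
    ring
  calc (Real.sqrt (2 * Real.pi * s))⁻¹ * Real.exp (-((y - m₁) ^ 2) / (2 * s)) *
        ((Real.sqrt (2 * Real.pi * t))⁻¹ * Real.exp (-((y - m₂) ^ 2) / (2 * t)))
      = ((Real.sqrt (2 * Real.pi * s))⁻¹ * (Real.sqrt (2 * Real.pi * t))⁻¹) *
        (Real.exp (-((y - m₁) ^ 2) / (2 * s)) * Real.exp (-((y - m₂) ^ 2) / (2 * t))) := by
        ring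
    _ = _ := by rw [hA, hE]; ring

lemma gpdf_conv (x m : ℝ) (σ a : ℝ) (hσ : 0 < σ) (ha : 0 < a) :
    ∫ u : ℝ, gpdf x σ u * gpdf m a u = gpdf m (σ + a) x := by
  have h : ∀ u : ℝ, gpdf x σ u * gpdf m a u =
      gpdf m (σ + a) x *
        gpdf ((σ⁻¹ + a⁻¹)⁻¹ * (σ⁻¹ * x + a⁻¹ * m)) ((σ⁻¹ + a⁻¹)⁻¹) u :=
    fun u => gpdf_prod x m σ a hσ ha u
  simp_rw [h, integral_const_mul]
  rw [gpdf_integral _ _ (by positivity), mul_one]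

theorem gaussian_inside_recursion_closed_form
    (σL σR a b : ℝ) (hσL : 0 < σL) (hσR : 0 < σR) (ha : 0 < a) (hb : 0 < b)
    (m₁ m₂ x : ℝ) :
    gpdf m₂ (σL + a + σR + b) m₁ *
      gpdf ((((σL + a)⁻¹ + (σR + b)⁻¹)⁻¹) * ((σL + a)⁻¹ * m₁ + (σR + b)⁻¹ * m₂))
        (((σL + a)⁻¹ + (σR + b)⁻¹)⁻¹) x =
    ∫ u : ℝ, ∫ v : ℝ,
      gpdf x σL u * gpdf x σR v * gpdf m₁ a u * gpdf m₂ b v := by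
  have h1 : ∀ u : ℝ, (∫ v : ℝ, gpdf x σL u * gpdf x σR v * gpdf m₁ a u * gpdf m₂ b v)
      = (gpdf x σL u * gpdf m₁ a u) * ∫ v : ℝ, gpdf x σR v * gpdf m₂ b v := by
    intro u
    rw [← integral_const_mul]
    congr 1; funext v; ring
  simp_rw [h1]
  rw [integral_mul_const, gpdf_conv x m₁ σL a hσL ha, gpdf_conv x m₂ σR b hσR hb]
  have := gpdf_prod m₁ m₂ (σL + a) (σR + b) (by positivity) (by positivity) x
  rw [show σL + a + σR + b = σL + a + (σR + b) from by ring, this]
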